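/- Let k ≥ 1 be an integer and 0 < T < ∞. Let h : [0,1] × [0,T) → ℝ be continuous, with continuous partial derivatives ∂_t h, ∂_r h, ∂_r² h on (0,1) × (0,T) satisfying ∂_t h = ∂_r² h + ∂_r h/r − k²·sin(2h)/(2r²) there, with finite energy (sup over t ∈ [0,T) of π·∫₀¹ ((∂_r h(r,t))² + k²·sin²(h(r,t))/r²)·r dr < ∞), with h(0,t) = 0 for all t ∈ [0,T), and such that t ↦ h(1,t) is uniformly continuous on [0,T). Then there exists τ₀ > 0 such that for every τ ∈ (0,τ₀] and every t ∈ [τ,T): h(r,t−τ) − π ≤ h(r,t) ≤ h(r,t−τ) + π for all r ∈ [0,1]. -/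

import Mathlib

open Real Set MeasureTheory

/-- Partial derivative in the radial variable `r` of `h(r,t)`. -/
noncomputable def pdr (h : ℝ × ℝ → ℝ) (p : ℝ × ℝ) : ℝ :=
  deriv (fun r => h (r, p.2)) p.1

/-- Second partial derivative in `r` of `h(r,t)`. -/
noncomputable def pdrr (h : ℝ × ℝ → ℝ) (p : ℝ × ℝ) : ℝ :=
  deriv (fun r => pdr h (r, p.2)) p.1

/-- Partial derivative in the time variable `t` of `h(r,t)`. -/
noncomputable def pdt (h : ℝ × ℝ → ℝ) (p : ℝ × ℝ) : ℝ :=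
  deriv (fun t => h (p.1, t)) p.2

/-- `h` is a classical solution of the `k`-equivariant radial harmonic map heat flow equation
`∂_t h = ∂_r² h + ∂_r h / r − k² sin(2h)/(2r²)` on the set `S`. -/
def IsClassicalSol (k : ℕ) (S : Set (ℝ × ℝ)) (h : ℝ × ℝ → ℝ) : Prop :=
  (∀ p ∈ S, DifferentiableAt ℝ (fun r => h (r, p.2)) p.1 ∧
      DifferentiableAt ℝ (fun r => pdr h (r, p.2)) p.1 ∧
      DifferentiableAt ℝ (fun t => h (p.1, t)) p.2) ∧
  ContinuousOn (pdr h) S ∧ ContinuousOn (pdrr h) S ∧ ContinuousOn (pdt h) S ∧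
  ∀ p ∈ S, pdt h p = pdrr h p + pdr h p / p.1 - (k : ℝ) ^ 2 * sin (2 * h p) / (2 * p.1 ^ 2)

/-! ### Auxiliary calculus lemmas -/

/-- Lipschitz bound for the sine function. -/
private lemma abs_sin_sub_sin_le' (a b : ℝ) : |Real.sin a - Real.sin b| ≤ |a - b| := by
  rw [Real.sin_sub_sin]
  have h1 : |Real.sin ((a - b) / 2)| ≤ |(a - b) / 2| := Real.abs_sin_le_abs
  have h2 : |Real.cos ((a + b) / 2)| ≤ 1 := Real.abs_cos_le_one _
  calc |2 * Real.sin ((a - b) / 2) * Real.cos ((a + b) / 2)|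
      = 2 * |Real.sin ((a - b) / 2)| * |Real.cos ((a + b) / 2)| := by
        rw [abs_mul, abs_mul]; norm_num
    _ ≤ 2 * |(a - b) / 2| * 1 := by
        apply mul_le_mul _ h2 (abs_nonneg _) (by positivity)
        exact mul_le_mul_of_nonneg_left h1 (by norm_num)
    _ = |a - b| := by rw [abs_div]; ring_nf

/-- If `f` is differentiable at `t₀` and has a maximum over `[a, t₀]` at `t₀`, then
the derivative at `t₀` is nonnegative. -/
private lemma deriv_nonneg_of_left_max {f : ℝ → ℝ} {a t₀ : ℝ} (ha : a < t₀)
    (hd : DifferentiableAt ℝ f t₀) (hmax : ∀ t ∈ Icc a t₀, f t ≤ f t₀) :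
    0 ≤ deriv f t₀ := by
  have hs := hd.hasDerivAt
  rw [hasDerivAt_iff_tendsto_slope] at hs
  have h1 : Filter.Tendsto (slope f t₀) (nhdsWithin t₀ (Iio t₀)) (nhds (deriv f t₀)) :=
    hs.mono_left (nhdsWithin_mono _ fun x hx => ne_of_lt hx)
  refine ge_of_tendsto h1 ?_
  filter_upwards [Ioo_mem_nhdsLT_of_mem (Set.mem_Ioc.2 ⟨ha, le_refl t₀⟩)] with t ht
  rw [slope_def_field]
  rw [div_nonneg_iff]
  right
  constructor
  · exact sub_nonpos.2 (hmax t ⟨ht.1.le, ht.2.le⟩)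
  · linarith [ht.2]

/-- One-sided second derivative test: if `f` is differentiable on `[x₀, b]`, has a maximum
over `[x₀, b]` at `x₀`, `deriv f x₀ = 0`, and `deriv f` is differentiable at `x₀`, then
the second derivative at `x₀` is nonpositive. -/
private lemma deriv2_nonpos_of_max {f : ℝ → ℝ} {x₀ b : ℝ} (hxb : x₀ < b)
    (hfd : ∀ x ∈ Icc x₀ b, DifferentiableAt ℝ f x)
    (hmax : ∀ x ∈ Icc x₀ b, f x ≤ f x₀)
    (h0 : deriv f x₀ = 0)
    (hd2 : DifferentiableAt ℝ (deriv f) x₀) :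
    deriv (deriv f) x₀ ≤ 0 := by
  set A : Set ℝ := {x | x ∈ Ioo x₀ b ∧ deriv f x ≤ 0} with hA
  have hcl : x₀ ∈ closure A := by
    rw [Metric.mem_closure_iff]
    intro ε hε
    set y := min b (x₀ + ε / 2) with hy_def
    have hy : x₀ < y := lt_min hxb (by linarith)
    have hyb : y ≤ b := min_le_left _ _
    have hcont : ContinuousOn f (Icc x₀ y) := fun x hx =>
      (hfd x ⟨hx.1, le_trans hx.2 hyb⟩).continuousAt.continuousWithinAt
    have hdiff : ∀ x ∈ Ioo x₀ y, HasDerivAt f (deriv f x) x := fun x hx =>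
      (hfd x ⟨hx.1.le, le_trans hx.2.le hyb⟩).hasDerivAt
    obtain ⟨c, hc, hc'⟩ := exists_hasDerivAt_eq_slope f (deriv f) hy hcont hdiff
    refine ⟨c, ⟨⟨hc.1, lt_of_lt_of_le hc.2 hyb⟩, ?_⟩, ?_⟩
    · rw [hc']
      have hfy : f y ≤ f x₀ := hmax y ⟨hy.le, hyb⟩
      rw [div_nonpos_iff]
      right
      exact ⟨by linarith, by linarith⟩
    · rw [Real.dist_eq, abs_of_neg (by linarith [hc.1] : x₀ - c < 0)]
      have : c < x₀ + ε / 2 := lt_of_lt_of_le hc.2 (min_le_right _ _)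
      linarith
  have hne : (nhdsWithin x₀ A).NeBot := mem_closure_iff_nhdsWithin_neBot.1 hcl
  have hten : Filter.Tendsto (slope (deriv f) x₀) (nhdsWithin x₀ A)
      (nhds (deriv (deriv f) x₀)) := by
    have hs := hd2.hasDerivAt
    rw [hasDerivAt_iff_tendsto_slope] at hs
    exact hs.mono_left (nhdsWithin_mono _ fun x hx => ne_of_gt hx.1.1)
  refine le_of_tendsto hten ?_
  filter_upwards [self_mem_nhdsWithin] with x hx
  rw [slope_def_field, h0, sub_zero]
  rw [div_nonpos_iff]
  right
  exact ⟨by linarith [hx.2, h0], by linarith [hx.1.1]⟩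

/-! ### The comparison principle on a compact rectangle away from the axis -/

/-- Weak parabolic comparison principle for the radial harmonic map heat flow on a
rectangle `[ρ,1] × [a,b]` with `ρ > 0`: if `u ≤ w` on the parabolic boundary then
`u ≤ w` everywhere. -/
private lemma comparison_core (k : ℕ) {ρ a b : ℝ} (hρ0 : 0 < ρ) (hρ1 : ρ < 1) (hab : a < b)
    {u w : ℝ × ℝ → ℝ}
    (hu_cont : ContinuousOn u (Icc ρ 1 ×ˢ Icc a b))
    (hw_cont : ContinuousOn w (Icc ρ 1 ×ˢ Icc a b))
    (hu_diff : ∀ p ∈ (Ioo ρ 1 ×ˢ Ioc a b : Set (ℝ × ℝ)),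
      DifferentiableAt ℝ (fun r => u (r, p.2)) p.1 ∧
      DifferentiableAt ℝ (fun r => pdr u (r, p.2)) p.1 ∧
      DifferentiableAt ℝ (fun t => u (p.1, t)) p.2)
    (hw_diff : ∀ p ∈ (Ioo ρ 1 ×ˢ Ioc a b : Set (ℝ × ℝ)),
      DifferentiableAt ℝ (fun r => w (r, p.2)) p.1 ∧
      DifferentiableAt ℝ (fun r => pdr w (r, p.2)) p.1 ∧
      DifferentiableAt ℝ (fun t => w (p.1, t)) p.2)
    (hu_pde : ∀ p ∈ (Ioo ρ 1 ×ˢ Ioc a b : Set (ℝ × ℝ)),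
      pdt u p = pdrr u p + pdr u p / p.1 - (k : ℝ) ^ 2 * Real.sin (2 * u p) / (2 * p.1 ^ 2))
    (hw_pde : ∀ p ∈ (Ioo ρ 1 ×ˢ Ioc a b : Set (ℝ × ℝ)),
      pdt w p = pdrr w p + pdr w p / p.1 - (k : ℝ) ^ 2 * Real.sin (2 * w p) / (2 * p.1 ^ 2))
    (hbd : ∀ p ∈ (Icc ρ 1 ×ˢ Icc a b : Set (ℝ × ℝ)),
      (p.1 = ρ ∨ p.1 = 1 ∨ p.2 = a) → u p ≤ w p) :
    ∀ p ∈ (Icc ρ 1 ×ˢ Icc a b : Set (ℝ × ℝ)), u p ≤ w p := by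
  set L : ℝ := (k : ℝ) ^ 2 / ρ ^ 2 + 1 with hLdef
  have hρ2 : (0:ℝ) < ρ ^ 2 := by positivity
  set φ : ℝ × ℝ → ℝ := fun p => (u p - w p) * Real.exp (-L * (p.2 - a)) with hφdef
  have hK : IsCompact (Icc ρ 1 ×ˢ Icc a b : Set (ℝ × ℝ)) := isCompact_Icc.prod isCompact_Icc
  have hKne : (Icc ρ 1 ×ˢ Icc a b : Set (ℝ × ℝ)).Nonempty :=
    ⟨(ρ, a), ⟨⟨le_rfl, hρ1.le⟩, ⟨le_rfl, hab.le⟩⟩⟩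
  have hφc : ContinuousOn φ (Icc ρ 1 ×ˢ Icc a b) := by
    apply (hu_cont.sub hw_cont).mul
    exact (Continuous.continuousOn (by fun_prop))
  obtain ⟨p₀, hp₀, hmax⟩ := hK.exists_isMaxOn hKne hφc
  by_cases hM : φ p₀ ≤ 0
  · intro p hp
    have h1 : φ p ≤ 0 := le_trans (hmax hp) hM
    have h2 : 0 < Real.exp (-L * (p.2 - a)) := Real.exp_pos _
    by_contra hcon
    push_neg at hcon
    have h3 : 0 < (u p - w p) * Real.exp (-L * (p.2 - a)) :=
      mul_pos (sub_pos.2 hcon) h2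
    have h4 : φ p = (u p - w p) * Real.exp (-L * (p.2 - a)) := rfl
    linarith [h4 ▸ h1]
  · exfalso
    push_neg at hM
    obtain ⟨r₀, t₀⟩ := p₀
    rw [Set.mem_prod] at hp₀
    obtain ⟨hr₀, ht₀⟩ := hp₀
    have hnotbd : ¬ (r₀ = ρ ∨ r₀ = 1 ∨ t₀ = a) := by
      intro hor
      have huw := hbd (r₀, t₀) ⟨hr₀, ht₀⟩ hor
      have h5 : φ (r₀, t₀) ≤ 0 :=
        mul_nonpos_iff.2 (Or.inr ⟨sub_nonpos.2 huw, (Real.exp_pos _).le⟩)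
      linarith
    push_neg at hnotbd
    obtain ⟨hne1, hne2, hne3⟩ := hnotbd
    have hr₀o : r₀ ∈ Ioo ρ 1 := ⟨lt_of_le_of_ne hr₀.1 (Ne.symm hne1), lt_of_le_of_ne hr₀.2 hne2⟩
    have ht₀o : t₀ ∈ Ioc a b := ⟨lt_of_le_of_ne ht₀.1 (Ne.symm hne3), ht₀.2⟩
    have hp₀S : ((r₀, t₀) : ℝ × ℝ) ∈ (Ioo ρ 1 ×ˢ Ioc a b : Set (ℝ × ℝ)) := ⟨hr₀o, ht₀o⟩
    set c₀ : ℝ := Real.exp (-L * (t₀ - a)) with hc₀def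
    have hc₀ : 0 < c₀ := Real.exp_pos _
    set D : ℝ := u (r₀, t₀) - w (r₀, t₀) with hDdef
    have hM' : 0 < D * c₀ := hM
    have hD : 0 < D := by
      rcases mul_pos_iff.1 hM' with ⟨h1, _⟩ | ⟨_, h2⟩
      · exact h1
      · linarith
    -- Spatial part: at the max point, first derivatives agree and the
    -- second derivative difference is nonpositive.
    set f : ℝ → ℝ := fun r => u (r, t₀) - w (r, t₀) with hfdef
    have hfd : ∀ r ∈ Ioo ρ 1, DifferentiableAt ℝ (fun r' => u (r', t₀)) r ∧
        DifferentiableAt ℝ (fun r' => w (r', t₀)) r := fun r hr =>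
      ⟨(hu_diff (r, t₀) ⟨hr, ht₀o⟩).1, (hw_diff (r, t₀) ⟨hr, ht₀o⟩).1⟩
    have hfdiff : ∀ r ∈ Ioo ρ 1, DifferentiableAt ℝ f r := fun r hr =>
      ((hfd r hr).1.sub (hfd r hr).2)
    have hfmax : ∀ r ∈ Icc ρ 1, f r ≤ f r₀ := by
      intro r hr
      have h1 : φ (r, t₀) ≤ φ (r₀, t₀) := hmax ⟨hr, ht₀⟩
      have h1' : f r * c₀ ≤ f r₀ * c₀ := h1
      exact le_of_mul_le_mul_right h1' hc₀
    have hlocmax : IsLocalMax f r₀ := by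
      filter_upwards [isOpen_Ioo.mem_nhds hr₀o] with x hx using hfmax x ⟨hx.1.le, hx.2.le⟩
    have hf'0 : deriv f r₀ = 0 := hlocmax.deriv_eq_zero
    have hderiv_eq : ∀ r ∈ Ioo ρ 1, deriv f r = pdr u (r, t₀) - pdr w (r, t₀) := by
      intro r hr
      exact deriv_sub (hfd r hr).1 (hfd r hr).2
    have hpdr_eq : pdr u (r₀, t₀) = pdr w (r₀, t₀) := by
      have h6 := hderiv_eq r₀ hr₀o
      rw [hf'0] at h6
      linarith
    set g : ℝ → ℝ := fun r => pdr u (r, t₀) - pdr w (r, t₀) with hgdef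
    have hfg : deriv f =ᶠ[nhds r₀] g := by
      filter_upwards [isOpen_Ioo.mem_nhds hr₀o] with x hx using hderiv_eq x hx
    have hgd : DifferentiableAt ℝ g r₀ :=
      ((hu_diff (r₀, t₀) hp₀S).2.1.sub (hw_diff (r₀, t₀) hp₀S).2.1)
    have hd2 : DifferentiableAt ℝ (deriv f) r₀ := (hfg.differentiableAt_iff).2 hgd
    have hderiv2 : deriv (deriv f) r₀ = pdrr u (r₀, t₀) - pdrr w (r₀, t₀) := by
      rw [hfg.deriv_eq]
      exact deriv_sub (hu_diff (r₀, t₀) hp₀S).2.1 (hw_diff (r₀, t₀) hp₀S).2.1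
    have hb' : r₀ < (r₀ + 1) / 2 := by linarith [hr₀o.2]
    have hd2le : deriv (deriv f) r₀ ≤ 0 := by
      apply deriv2_nonpos_of_max hb' ?_ ?_ hf'0 hd2
      · intro x hx
        exact hfdiff x ⟨lt_of_lt_of_le hr₀o.1 hx.1, lt_of_le_of_lt hx.2 (by linarith [hr₀o.2])⟩
      · intro x hx
        exact hfmax x ⟨le_trans hr₀.1 hx.1, le_trans hx.2 (by linarith [hr₀o.2])⟩
    have hpdrr_le : pdrr u (r₀, t₀) - pdrr w (r₀, t₀) ≤ 0 := hderiv2 ▸ hd2le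
    -- Temporal part: at the max point, the time derivative difference is at least L·D.
    have hut : DifferentiableAt ℝ (fun t => u (r₀, t)) t₀ := (hu_diff _ hp₀S).2.2
    have hwt : DifferentiableAt ℝ (fun t => w (r₀, t)) t₀ := (hw_diff _ hp₀S).2.2
    have hexp : HasDerivAt (fun t : ℝ => Real.exp (-L * (t - a)))
        (Real.exp (-L * (t₀ - a)) * (-L)) t₀ := by
      have h1 : HasDerivAt (fun t : ℝ => -L * (t - a)) (-L) t₀ := by
        simpa using ((hasDerivAt_id t₀).sub_const a).const_mul (-L)
      simpa using h1.exp
    set q : ℝ → ℝ := fun t => (u (r₀, t) - w (r₀, t)) * Real.exp (-L * (t - a)) with hqdef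
    have hq : HasDerivAt q
        ((deriv (fun t => u (r₀, t)) t₀ - deriv (fun t => w (r₀, t)) t₀) * c₀ +
          D * (Real.exp (-L * (t₀ - a)) * (-L))) t₀ :=
      (hut.hasDerivAt.sub hwt.hasDerivAt).mul hexp
    have hqmax : ∀ t ∈ Icc a t₀, q t ≤ q t₀ := fun t ht =>
      hmax (Set.mk_mem_prod hr₀ ⟨ht.1, le_trans ht.2 ht₀.2⟩)
    have h0le : 0 ≤ deriv q t₀ := deriv_nonneg_of_left_max ht₀o.1 hq.differentiableAt hqmax
    rw [hq.deriv] at h0le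
    have hpdt : L * D ≤ pdt u (r₀, t₀) - pdt w (r₀, t₀) := by
      have e1 : pdt u (r₀, t₀) = deriv (fun t => u (r₀, t)) t₀ := rfl
      have e2 : pdt w (r₀, t₀) = deriv (fun t => w (r₀, t)) t₀ := rfl
      rw [e1, e2]
      nlinarith [h0le, hc₀]
    -- PDE part: combine.
    have hEu := hu_pde (r₀, t₀) hp₀S
    have hEw := hw_pde (r₀, t₀) hp₀S
    have hsin : |Real.sin (2 * u (r₀, t₀)) - Real.sin (2 * w (r₀, t₀))| ≤ 2 * D := by
      refine le_trans (abs_sin_sub_sin_le' _ _) ?_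
      rw [show 2 * u (r₀, t₀) - 2 * w (r₀, t₀) = 2 * D by rw [hDdef]; ring]
      rw [abs_of_pos (by linarith)]
    have hr₀2 : (0:ℝ) < r₀ ^ 2 := pow_pos (hρ0.trans hr₀o.1) 2
    have hA : (k : ℝ) ^ 2 * Real.sin (2 * w (r₀, t₀)) / (2 * r₀ ^ 2)
        - (k : ℝ) ^ 2 * Real.sin (2 * u (r₀, t₀)) / (2 * r₀ ^ 2) ≤ (L - 1) * D := by
      have h3 : Real.sin (2 * w (r₀, t₀)) - Real.sin (2 * u (r₀, t₀)) ≤ 2 * D := by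
        have := (abs_le.1 hsin).1
        linarith
      have hk2 : (0:ℝ) ≤ (k : ℝ) ^ 2 := by positivity
      calc (k : ℝ) ^ 2 * Real.sin (2 * w (r₀, t₀)) / (2 * r₀ ^ 2)
            - (k : ℝ) ^ 2 * Real.sin (2 * u (r₀, t₀)) / (2 * r₀ ^ 2)
          = (k : ℝ) ^ 2 * (Real.sin (2 * w (r₀, t₀)) - Real.sin (2 * u (r₀, t₀)))
              / (2 * r₀ ^ 2) := by ring
        _ ≤ (k : ℝ) ^ 2 * (2 * D) / (2 * r₀ ^ 2) := by
            apply div_le_div_of_nonneg_right _ (by positivity)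
            exact mul_le_mul_of_nonneg_left h3 hk2
        _ = (k : ℝ) ^ 2 * D / r₀ ^ 2 := by
            field_simp
        _ ≤ (k : ℝ) ^ 2 * D / ρ ^ 2 := by
            apply div_le_div_of_nonneg_left (by positivity) hρ2
            exact pow_le_pow_left₀ hρ0.le hr₀o.1.le 2
        _ = (L - 1) * D := by rw [hLdef]; ring
    have hfinal : pdt u (r₀, t₀) - pdt w (r₀, t₀) ≤ (L - 1) * D := by
      rw [hEu, hEw, hpdr_eq]
      have h7 : (r₀, t₀).1 = r₀ := rfl
      rw [h7] at *
      linarith [hpdrr_le, hA]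
    nlinarith [hpdt, hfinal, hD]

/-- Comparison of `h` with its own time translates (part of the paper's Corollary 4.10):
for a finite-energy solution with `h(0,t) = 0` and uniformly continuous boundary trace
`t ↦ h(1,t)`, there is `τ₀ > 0` with `h(r,t−τ) − π ≤ h(r,t) ≤ h(r,t−τ) + π` for all
`0 < τ ≤ τ₀`, `t ∈ [τ,T)`, `r ∈ [0,1]`. -/
theorem comparison_with_time_translate
    (k : ℕ) (hk : 1 ≤ k) (T : ℝ) (hT : 0 < T)
    (h : ℝ × ℝ → ℝ)
    (hcont : ContinuousOn h (Icc (0:ℝ) 1 ×ˢ Ico (0:ℝ) T))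
    (hsol : IsClassicalSol k (Ioo (0:ℝ) 1 ×ˢ Ioo (0:ℝ) T) h)
    (henergy : ∃ E₀ : ℝ, ∀ t ∈ Ico (0:ℝ) T,
      IntegrableOn
        (fun r => (pdr h (r, t) ^ 2 + (k : ℝ) ^ 2 * sin (h (r, t)) ^ 2 / r ^ 2) * r)
        (Ioo 0 1) ∧
      π * ∫ r in Ioo (0:ℝ) 1,
          (pdr h (r, t) ^ 2 + (k : ℝ) ^ 2 * sin (h (r, t)) ^ 2 / r ^ 2) * r ≤ E₀)
    (hzero : ∀ t ∈ Ico (0:ℝ) T, h (0, t) = 0)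
    (hUC : UniformContinuousOn (fun t => h (1, t)) (Ico 0 T)) :
    ∃ τ₀ : ℝ, 0 < τ₀ ∧ ∀ τ ∈ Ioc (0:ℝ) τ₀, ∀ t ∈ Ico τ T, ∀ r ∈ Icc (0:ℝ) 1,
      h (r, t - τ) - π ≤ h (r, t) ∧ h (r, t) ≤ h (r, t - τ) + π := by
  have hπ := Real.pi_gt_three
  -- modulus for the boundary trace
  rw [Metric.uniformContinuousOn_iff] at hUC
  obtain ⟨δb, hδb, hb⟩ := hUC 1 one_pos
  -- modulus for the initial-time comparison on the compact strip [0,1]×[0,T/2]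
  have hC₀ : IsCompact (Icc (0:ℝ) 1 ×ˢ Icc (0:ℝ) (T / 2)) := isCompact_Icc.prod isCompact_Icc
  have hC₀sub : (Icc (0:ℝ) 1 ×ˢ Icc (0:ℝ) (T / 2)) ⊆ Icc (0:ℝ) 1 ×ˢ Ico (0:ℝ) T := by
    rintro ⟨x, s⟩ ⟨hx, hs⟩
    exact ⟨hx, ⟨hs.1, lt_of_le_of_lt hs.2 (by linarith)⟩⟩
  have hUC₀ := hC₀.uniformContinuousOn_of_continuous (hcont.mono hC₀sub)
  rw [Metric.uniformContinuousOn_iff] at hUC₀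
  obtain ⟨δi, hδi, hi⟩ := hUC₀ 1 one_pos
  refine ⟨min (min (δb / 2) (δi / 2)) (T / 2), lt_min (lt_min (by linarith) (by linarith))
    (by linarith), ?_⟩
  rintro τ ⟨hτ0, hττ₀⟩ t ⟨hτt, htT⟩ r hr
  have hτδb : τ < δb := by
    have := le_trans hττ₀ (le_trans (min_le_left _ _) (min_le_left _ _))
    linarith
  have hτδi : τ < δi := by
    have := le_trans hττ₀ (le_trans (min_le_left _ _) (min_le_right _ _))
    linarith
  have hτT2 : τ ≤ T / 2 := le_trans hττ₀ (min_le_right _ _)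
  set T' : ℝ := (t + T) / 2 with hT'def
  have htT' : t ≤ T' := by simp only [hT'def]; linarith
  have hT'T : T' < T := by simp only [hT'def]; linarith
  have hτT' : τ < T' := lt_of_le_of_lt hτt (by simp only [hT'def]; linarith)
  -- modulus near the axis, on the compact strip [0,1]×[0,T']
  have hC₁ : IsCompact (Icc (0:ℝ) 1 ×ˢ Icc (0:ℝ) T') := isCompact_Icc.prod isCompact_Icc
  have hC₁sub : (Icc (0:ℝ) 1 ×ˢ Icc (0:ℝ) T') ⊆ Icc (0:ℝ) 1 ×ˢ Ico (0:ℝ) T := by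
    rintro ⟨x, s⟩ ⟨hx, hs⟩
    exact ⟨hx, ⟨hs.1, lt_of_le_of_lt hs.2 hT'T⟩⟩
  have hUC₁ := hC₁.uniformContinuousOn_of_continuous (hcont.mono hC₁sub)
  rw [Metric.uniformContinuousOn_iff] at hUC₁
  obtain ⟨δρ, hδρ, hρs⟩ := hUC₁ 1 one_pos
  set ρ : ℝ := min (δρ / 2) (1 / 2) with hρdef
  have hρ0 : 0 < ρ := lt_min (by linarith) (by norm_num)
  have hρ1 : ρ < 1 := lt_of_le_of_lt (min_le_right _ _) (by norm_num)
  have hρδ : ρ < δρ := lt_of_le_of_lt (min_le_left _ _) (by linarith)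
  -- smallness of h near the axis on [0,1]×[0,T']
  have hsmall : ∀ r' ∈ Icc (0:ℝ) ρ, ∀ t' ∈ Icc (0:ℝ) T', |h (r', t')| < 1 := by
    intro r' hr' t' ht'
    have hz : h (0, t') = 0 := hzero t' ⟨ht'.1, lt_of_le_of_lt ht'.2 hT'T⟩
    have hmem1 : ((r', t') : ℝ × ℝ) ∈ Icc (0:ℝ) 1 ×ˢ Icc (0:ℝ) T' :=
      ⟨⟨hr'.1, le_trans hr'.2 hρ1.le⟩, ht'⟩
    have hmem2 : ((0, t') : ℝ × ℝ) ∈ Icc (0:ℝ) 1 ×ˢ Icc (0:ℝ) T' :=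
      ⟨⟨le_rfl, zero_le_one⟩, ht'⟩
    have hdist : dist ((r', t') : ℝ × ℝ) ((0, t') : ℝ × ℝ) < δρ := by
      rw [Prod.dist_eq]
      simp only [dist_self, Real.dist_eq, sub_zero]
      rw [max_eq_left (abs_nonneg _), abs_of_nonneg hr'.1]
      exact lt_of_le_of_lt hr'.2 hρδ
    have hd := hρs _ hmem1 _ hmem2 hdist
    rw [Real.dist_eq, hz, sub_zero] at hd
    exact hd
  rcases le_total r ρ with hcase | hcase
  · -- near the axis: both values are tiny
    have h1 := abs_lt.1 (hsmall r ⟨hr.1, hcase⟩ t ⟨le_trans hτ0.le hτt, htT'⟩)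
    have h2 := abs_lt.1 (hsmall r ⟨hr.1, hcase⟩ (t - τ) ⟨by linarith, by linarith⟩)
    exact ⟨by linarith, by linarith⟩
  · -- away from the axis: comparison principle
    -- the time-translated (and vertically shifted) solutions
    set W : ℝ → ℝ × ℝ → ℝ := fun c p => h (p.1, p.2 - τ) + c with hWdef
    have hWpdr : ∀ (c : ℝ) (qq : ℝ × ℝ), pdr (W c) qq = pdr h (qq.1, qq.2 - τ) := by
      intro c qq
      show deriv (fun r' => h (r', qq.2 - τ) + c) qq.1 = _
      rw [deriv_add_const]
      rfl
    have hWpdrr : ∀ (c : ℝ) (qq : ℝ × ℝ), pdrr (W c) qq = pdrr h (qq.1, qq.2 - τ) := by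
      intro c qq
      have heq : (fun r' => pdr (W c) (r', qq.2)) = (fun r' => pdr h (r', qq.2 - τ)) :=
        funext fun r' => hWpdr c (r', qq.2)
      show deriv (fun r' => pdr (W c) (r', qq.2)) qq.1
        = deriv (fun r' => pdr h (r', qq.2 - τ)) qq.1
      rw [heq]
    have hWpdt : ∀ (c : ℝ) (qq : ℝ × ℝ), pdt (W c) qq = pdt h (qq.1, qq.2 - τ) := by
      intro c qq
      show deriv (fun s => h (qq.1, s - τ) + c) qq.2 = _
      rw [deriv_add_const]
      exact deriv_comp_sub_const (fun s => h (qq.1, s)) τ qq.2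
    have hshift : ∀ qq ∈ (Ioo ρ 1 ×ˢ Ioc τ T' : Set (ℝ × ℝ)),
        ((qq.1, qq.2 - τ) : ℝ × ℝ) ∈ (Ioo (0:ℝ) 1 ×ˢ Ioo (0:ℝ) T : Set (ℝ × ℝ)) := by
      rintro ⟨x, s⟩ ⟨hx, hs⟩
      exact ⟨⟨lt_trans hρ0 hx.1, hx.2⟩, ⟨sub_pos.2 hs.1, by
        have := hs.2
        simp only at this ⊢
        linarith⟩⟩
    have hsubS : (Ioo ρ 1 ×ˢ Ioc τ T' : Set (ℝ × ℝ)) ⊆ Ioo (0:ℝ) 1 ×ˢ Ioo (0:ℝ) T := by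
      rintro ⟨x, s⟩ ⟨hx, hs⟩
      exact ⟨⟨lt_trans hρ0 hx.1, hx.2⟩, ⟨lt_trans hτ0 hs.1, lt_of_le_of_lt hs.2 hT'T⟩⟩
    -- continuity hypotheses
    have hhcont : ContinuousOn h (Icc ρ 1 ×ˢ Icc τ T') := hcont.mono (by
      rintro ⟨x, s⟩ ⟨hx, hs⟩
      exact ⟨⟨le_trans hρ0.le hx.1, hx.2⟩, ⟨le_trans hτ0.le hs.1, lt_of_le_of_lt hs.2 hT'T⟩⟩)
    have hWcont : ∀ c : ℝ, ContinuousOn (W c) (Icc ρ 1 ×ˢ Icc τ T') := by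
      intro c
      apply ContinuousOn.add _ continuousOn_const
      apply hcont.comp (Continuous.continuousOn (by fun_prop) :
        ContinuousOn (fun p : ℝ × ℝ => (p.1, p.2 - τ)) (Icc ρ 1 ×ˢ Icc τ T'))
      rintro ⟨x, s⟩ ⟨hx, hs⟩
      refine ⟨⟨le_trans hρ0.le hx.1, hx.2⟩, ⟨?_, ?_⟩⟩
      · simp only; linarith [hs.1]
      · simp only; linarith [hs.2, hT'T]
    -- differentiability hypotheses
    have hhdiff : ∀ p ∈ (Ioo ρ 1 ×ˢ Ioc τ T' : Set (ℝ × ℝ)),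
        DifferentiableAt ℝ (fun r' => h (r', p.2)) p.1 ∧
        DifferentiableAt ℝ (fun r' => pdr h (r', p.2)) p.1 ∧
        DifferentiableAt ℝ (fun t' => h (p.1, t')) p.2 := fun p hp => hsol.1 p (hsubS hp)
    have hWdiff : ∀ c : ℝ, ∀ p ∈ (Ioo ρ 1 ×ˢ Ioc τ T' : Set (ℝ × ℝ)),
        DifferentiableAt ℝ (fun r' => W c (r', p.2)) p.1 ∧
        DifferentiableAt ℝ (fun r' => pdr (W c) (r', p.2)) p.1 ∧
        DifferentiableAt ℝ (fun t' => W c (p.1, t')) p.2 := by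
      intro c p hp
      obtain ⟨hd1, hd2, hd3⟩ := hsol.1 _ (hshift p hp)
      refine ⟨?_, ?_, ?_⟩
      · exact hd1.add_const c
      · have heq : (fun r' => pdr (W c) (r', p.2)) = (fun r' => pdr h (r', p.2 - τ)) :=
          funext fun r' => hWpdr c (r', p.2)
        rw [heq]
        exact hd2
      · have h1 : DifferentiableAt ℝ (fun s => h (p.1, s - τ)) p.2 := by
          have := hd3.comp p.2 (differentiableAt_id.sub_const τ)
          exact this
        exact h1.add_const c
    -- PDE hypotheses
    have hhpde : ∀ p ∈ (Ioo ρ 1 ×ˢ Ioc τ T' : Set (ℝ × ℝ)),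
        pdt h p = pdrr h p + pdr h p / p.1 - (k : ℝ) ^ 2 * Real.sin (2 * h p) / (2 * p.1 ^ 2) :=
      fun p hp => hsol.2.2.2.2 p (hsubS hp)
    have hWpde : ∀ c : ℝ, (∀ x : ℝ, Real.sin (2 * x + 2 * c) = Real.sin (2 * x)) →
        ∀ p ∈ (Ioo ρ 1 ×ˢ Ioc τ T' : Set (ℝ × ℝ)),
        pdt (W c) p = pdrr (W c) p + pdr (W c) p / p.1
          - (k : ℝ) ^ 2 * Real.sin (2 * W c p) / (2 * p.1 ^ 2) := by
      intro c hc p hp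
      have hpde := hsol.2.2.2.2 _ (hshift p hp)
      rw [hWpdt, hWpdrr, hWpdr]
      have hsin2 : Real.sin (2 * W c p) = Real.sin (2 * h (p.1, p.2 - τ)) := by
        rw [show 2 * W c p = 2 * h (p.1, p.2 - τ) + 2 * c from by simp only [hWdef]; ring]
        exact hc _
      rw [hsin2]
      exact hpde
    -- boundary comparison for the upper bound
    have hbd1 : ∀ p ∈ (Icc ρ 1 ×ˢ Icc τ T' : Set (ℝ × ℝ)),
        (p.1 = ρ ∨ p.1 = 1 ∨ p.2 = τ) → h p ≤ W π p := by
      rintro ⟨x, s⟩ ⟨hx, hs⟩ hor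
      simp only [hWdef]
      have hs0 : (0:ℝ) ≤ s := le_trans hτ0.le hs.1
      rcases hor with h1 | h1 | h1
      · subst h1
        have ha := abs_lt.1 (hsmall ρ ⟨hρ0.le, le_rfl⟩ s ⟨hs0, hs.2⟩)
        have hb' := abs_lt.1 (hsmall ρ ⟨hρ0.le, le_rfl⟩ (s - τ) ⟨by linarith [hs.1], by
          linarith [hs.2]⟩)
        linarith
      · subst h1
        have hmem1 : s ∈ Ico (0:ℝ) T := ⟨hs0, lt_of_le_of_lt hs.2 hT'T⟩
        have hmem2 : s - τ ∈ Ico (0:ℝ) T := ⟨by linarith [hs.1], by linarith [hs.2, hT'T]⟩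
        have hdist : dist s (s - τ) < δb := by
          rw [Real.dist_eq]
          rw [show s - (s - τ) = τ from by ring, abs_of_pos hτ0]
          exact hτδb
        have hd := hb s hmem1 (s - τ) hmem2 hdist
        rw [Real.dist_eq] at hd
        have := abs_lt.1 hd
        linarith [this.1, this.2]
      · rw [show s = τ from h1]
        have hmem1 : ((x, τ) : ℝ × ℝ) ∈ Icc (0:ℝ) 1 ×ˢ Icc (0:ℝ) (T / 2) :=
          ⟨⟨le_trans hρ0.le hx.1, hx.2⟩, ⟨hτ0.le, hτT2⟩⟩
        have hmem2 : ((x, 0) : ℝ × ℝ) ∈ Icc (0:ℝ) 1 ×ˢ Icc (0:ℝ) (T / 2) :=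
          ⟨⟨le_trans hρ0.le hx.1, hx.2⟩, ⟨le_rfl, by linarith⟩⟩
        have hdist : dist ((x, τ) : ℝ × ℝ) ((x, 0) : ℝ × ℝ) < δi := by
          rw [Prod.dist_eq]
          simp only [dist_self, Real.dist_eq, sub_zero]
          rw [max_eq_right (abs_nonneg _), abs_of_pos hτ0]
          exact hτδi
        have hd := hi _ hmem1 _ hmem2 hdist
        rw [Real.dist_eq] at hd
        have h2 := abs_lt.1 hd
        simp only [sub_self]
        linarith [h2.1, h2.2]
    -- boundary comparison for the lower bound
    have hbd2 : ∀ p ∈ (Icc ρ 1 ×ˢ Icc τ T' : Set (ℝ × ℝ)),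
        (p.1 = ρ ∨ p.1 = 1 ∨ p.2 = τ) → W (-π) p ≤ h p := by
      rintro ⟨x, s⟩ ⟨hx, hs⟩ hor
      simp only [hWdef]
      have hs0 : (0:ℝ) ≤ s := le_trans hτ0.le hs.1
      rcases hor with h1 | h1 | h1
      · subst h1
        have ha := abs_lt.1 (hsmall ρ ⟨hρ0.le, le_rfl⟩ s ⟨hs0, hs.2⟩)
        have hb' := abs_lt.1 (hsmall ρ ⟨hρ0.le, le_rfl⟩ (s - τ) ⟨by linarith [hs.1], by
          linarith [hs.2]⟩)
        linarith
      · subst h1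
        have hmem1 : s ∈ Ico (0:ℝ) T := ⟨hs0, lt_of_le_of_lt hs.2 hT'T⟩
        have hmem2 : s - τ ∈ Ico (0:ℝ) T := ⟨by linarith [hs.1], by linarith [hs.2, hT'T]⟩
        have hdist : dist s (s - τ) < δb := by
          rw [Real.dist_eq]
          rw [show s - (s - τ) = τ from by ring, abs_of_pos hτ0]
          exact hτδb
        have hd := hb s hmem1 (s - τ) hmem2 hdist
        rw [Real.dist_eq] at hd
        have := abs_lt.1 hd
        linarith [this.1, this.2]
      · rw [show s = τ from h1]
        have hmem1 : ((x, τ) : ℝ × ℝ) ∈ Icc (0:ℝ) 1 ×ˢ Icc (0:ℝ) (T / 2) :=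
          ⟨⟨le_trans hρ0.le hx.1, hx.2⟩, ⟨hτ0.le, hτT2⟩⟩
        have hmem2 : ((x, 0) : ℝ × ℝ) ∈ Icc (0:ℝ) 1 ×ˢ Icc (0:ℝ) (T / 2) :=
          ⟨⟨le_trans hρ0.le hx.1, hx.2⟩, ⟨le_rfl, by linarith⟩⟩
        have hdist : dist ((x, τ) : ℝ × ℝ) ((x, 0) : ℝ × ℝ) < δi := by
          rw [Prod.dist_eq]
          simp only [dist_self, Real.dist_eq, sub_zero]
          rw [max_eq_right (abs_nonneg _), abs_of_pos hτ0]
          exact hτδi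
        have hd := hi _ hmem1 _ hmem2 hdist
        rw [Real.dist_eq] at hd
        have h2 := abs_lt.1 hd
        simp only [sub_self]
        linarith [h2.1, h2.2]
    -- apply the comparison principle twice
    have hsinπ : ∀ x : ℝ, Real.sin (2 * x + 2 * π) = Real.sin (2 * x) :=
      fun x => Real.sin_add_two_pi (2 * x)
    have hsinnegπ : ∀ x : ℝ, Real.sin (2 * x + 2 * (-π)) = Real.sin (2 * x) := by
      intro x
      rw [show 2 * x + 2 * (-π) = 2 * x - 2 * π from by ring]
      exact Real.sin_sub_two_pi (2 * x)
    have hcore1 := comparison_core k hρ0 hρ1 hτT' hhcont (hWcont π) hhdiff (hWdiff π)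
      hhpde (hWpde π hsinπ) hbd1
    have hcore2 := comparison_core k hρ0 hρ1 hτT' (hWcont (-π)) hhcont (hWdiff (-π)) hhdiff
      (hWpde (-π) hsinnegπ) hhpde hbd2
    have hmem : ((r, t) : ℝ × ℝ) ∈ (Icc ρ 1 ×ˢ Icc τ T' : Set (ℝ × ℝ)) :=
      ⟨⟨hcase, hr.2⟩, ⟨hτt, htT'⟩⟩
    have e1 := hcore1 (r, t) hmem
    have e2 := hcore2 (r, t) hmem
    simp only [hWdef] at e1 e2
    exact ⟨by linarith, by linarith⟩
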